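/- Given a sequence of real numbers (q_k)_{k∈ℕ₀}, let I(z) := q_k + (z − k)(q_{k+1} − q_k) for z ∈ [k, k+1), k = 0, 1, 2, …, be its piecewise-linear interpolant. If the sequence (q_k) is positive, monotonically decreasing, and satisfies q_{k+1} ≥ q_k / (1 + 1/(k+1)) for all k = 0, 1, 2, …, then I'(z)·z + I(z) ≥ 0 for every z ∈ [0,∞) that is not a nonnegative integer (where I'(z) = q_{k+1} − q_k is the slope on (k, k+1)). -/

import Mathlib

open Set

/-- The piecewise-linear interpolant of a sequence `(q_k)` at integer points:
`I(z) = q_k + (z − k)(q_{k+1} − q_k)` for `z ∈ [k, k+1)`. -/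
noncomputable def interpolant (q : ℕ → ℝ) (z : ℝ) : ℝ :=
  q ⌊z⌋₊ + (z - ⌊z⌋₊) * (q (⌊z⌋₊ + 1) - q ⌊z⌋₊)

/-- If `(q_k)` is positive, monotonically decreasing and satisfies
`q_{k+1} ≥ q_k/(1 + 1/(k+1))`, then its piecewise-linear interpolant `I` satisfies
`I'(z)·z + I(z) ≥ 0` for every non-integer `z ≥ 0`, where `I'(z) = q_{k+1} − q_k` is the
slope on `(k, k+1)`. -/
theorem stmt8 (q : ℕ → ℝ)
    (hpos : ∀ k, 0 < q k)
    (hdec : ∀ k, q (k + 1) ≤ q k)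
    (hratio : ∀ k : ℕ, q k / (1 + 1 / ((k : ℝ) + 1)) ≤ q (k + 1)) :
    ∀ (k : ℕ) (z : ℝ), z ∈ Set.Ioo (k : ℝ) ((k : ℝ) + 1) →
      0 ≤ (q (k + 1) - q k) * z + interpolant q z := by
  intro k z hz
  obtain ⟨h1, h2⟩ := hz
  have hfl : ⌊z⌋₊ = k := by
    apply Nat.floor_eq_iff (le_trans (Nat.cast_nonneg k) h1.le) |>.mpr
    exact ⟨h1.le, h2⟩
  have hr := hratio k
  have hk1 : (0:ℝ) < (k:ℝ) + 1 := by positivity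
  have hden : (0:ℝ) < 1 + 1 / ((k : ℝ) + 1) := by positivity
  have key : q k * ((k:ℝ) + 1) ≤ q (k + 1) * ((k:ℝ) + 2) := by
    rw [div_le_iff₀ hden] at hr
    calc q k * ((k:ℝ) + 1) ≤ q (k + 1) * (1 + 1 / ((k : ℝ) + 1)) * ((k:ℝ)+1) :=
          mul_le_mul_of_nonneg_right hr hk1.le
      _ = q (k + 1) * ((k:ℝ) + 2) := by field_simp; ring_nf
  simp only [interpolant, hfl]
  nlinarith [hdec k, hpos k, hpos (k+1)]
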